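/- Let n ∈ ℕ, let γ : ℝ → Mₙ(ℝ) be continuous with γ(t) invertible for every t ∈ [0,1], and let V be a linear subspace of Mₙ(ℝ). Then the set of matrices of the form ∫_0^1 γ(t)*v(t)*(γ(t))⁻¹ dt, where v ranges over all continuous functions v : ℝ → Mₙ(ℝ) with v(t) ∈ V for all t ∈ [0,1], is equal to the linear span of the set { γ(t)*x*(γ(t))⁻¹ : t ∈ [0,1], x ∈ V }. -/

import Mathlib

attribute [local instance] Matrix.normedAddCommGroup Matrix.normedSpace

open MeasureTheory intervalIntegral

set_option maxHeartbeats 1000000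

section Aux

variable {n : ℕ} {γ : ℝ → Matrix (Fin n) (Fin n) ℝ}

/-- Continuity of the conjugated integrand at points of `[0,1]`. -/
lemma sard_aux_contAt (hγ : Continuous γ)
    (hγinv : ∀ t ∈ Set.Icc (0:ℝ) 1, IsUnit (γ t))
    {v : ℝ → Matrix (Fin n) (Fin n) ℝ} (hv : Continuous v) :
    ∀ t ∈ Set.Icc (0:ℝ) 1, ContinuousAt (fun s => γ s * v s * (γ s)⁻¹) t := by
  intro t ht
  have hdet : (γ t).det ≠ 0 :=
    ((Matrix.isUnit_iff_isUnit_det _).mp (hγinv t ht)).ne_zero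
  have hinv : ContinuousAt (fun s => (γ s)⁻¹) t := by
    refine ContinuousAt.comp ?_ hγ.continuousAt
    refine continuousAt_matrix_inv _ ?_
    rw [Ring.inverse_eq_inv']
    exact continuousAt_inv₀ hdet
  exact (hγ.continuousAt.mul hv.continuousAt).mul hinv

lemma sard_aux_integrable (hγ : Continuous γ)
    (hγinv : ∀ t ∈ Set.Icc (0:ℝ) 1, IsUnit (γ t))
    {v : ℝ → Matrix (Fin n) (Fin n) ℝ} (hv : Continuous v) :
    @IntervalIntegrable _ _ NormedAddGroup.toENormedAddMonoid
      (fun t => γ t * v t * (γ t)⁻¹) volume 0 1 := by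
  apply ContinuousOn.intervalIntegrable
  rw [Set.uIcc_of_le (zero_le_one : (0:ℝ) ≤ 1)]
  exact fun t ht => (sard_aux_contAt hγ hγinv hv t ht).continuousWithinAt

/-- A scalar function continuous at each point of `[0,1]` whose square has zero integral
vanishes on `[0,1]`. -/
lemma sard_aux_scalar_zero {h : ℝ → ℝ}
    (hcont : ∀ t ∈ Set.Icc (0:ℝ) 1, ContinuousAt h t)
    (hz : (∫ t in (0:ℝ)..1, h t * h t) = 0) :
    ∀ t ∈ Set.Icc (0:ℝ) 1, h t = 0 := by
  have hhInt : IntervalIntegrable (fun t => h t * h t) volume 0 1 := by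
    apply ContinuousOn.intervalIntegrable
    rw [Set.uIcc_of_le (zero_le_one : (0:ℝ) ≤ 1)]
    exact fun t ht => ((hcont t ht).mul (hcont t ht)).continuousWithinAt
  have hae : (fun t => h t * h t) =ᵐ[volume.restrict (Set.Ioc (0:ℝ) 1)] 0 := by
    rw [← intervalIntegral.integral_eq_zero_iff_of_le_of_nonneg_ae zero_le_one
      (Filter.Eventually.of_forall fun t => mul_self_nonneg (h t)) hhInt]
    exact hz
  have haeh : h =ᵐ[volume.restrict (Set.Icc (0:ℝ) 1)] 0 := by
    rw [← Measure.restrict_congr_set Ioc_ae_eq_Icc]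
    filter_upwards [hae] with t ht
    exact mul_self_eq_zero.mp ht
  exact fun t ht =>
    Measure.eqOn_Icc_of_ae_eq volume (by norm_num : (0:ℝ) ≠ 1) haeh
      (fun s hs => (hcont s hs).continuousWithinAt) continuousOn_const ht

/-- Each generator `γ t₀ · x · γ t₀⁻¹` lies in any submodule containing all the integrals
of continuous `V`-valued controls. -/
lemma sard_aux_gen_mem (hγ : Continuous γ)
    (hγinv : ∀ t ∈ Set.Icc (0:ℝ) 1, IsUnit (γ t))
    (V S : Submodule ℝ (Matrix (Fin n) (Fin n) ℝ))
    (hS : ∀ v : ℝ → Matrix (Fin n) (Fin n) ℝ, Continuous v →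
      (∀ t ∈ Set.Icc (0:ℝ) 1, v t ∈ V) →
      (∫ t in (0:ℝ)..1, γ t * v t * (γ t)⁻¹) ∈ S)
    {t₀ : ℝ} (ht₀ : t₀ ∈ Set.Icc (0:ℝ) 1)
    {x : Matrix (Fin n) (Fin n) ℝ} (hx : x ∈ V) :
    γ t₀ * x * (γ t₀)⁻¹ ∈ S := by
  rw [← Subspace.forall_mem_dualAnnihilator_apply_eq_zero_iff]
  intro φ hφ
  have hφ' := (Submodule.mem_dualAnnihilator φ).mp hφ
  let Φ : Matrix (Fin n) (Fin n) ℝ →L[ℝ] ℝ := LinearMap.toContinuousLinearMap φ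
  have hΦ : ∀ y, Φ y = φ y := fun y => rfl
  -- the scalar function `h`
  let h : ℝ → ℝ := fun t => Φ (γ t * x * (γ t)⁻¹)
  have hcontAt : ∀ t ∈ Set.Icc (0:ℝ) 1, ContinuousAt h t := fun t ht =>
    (Φ.continuous.continuousAt).comp (sard_aux_contAt hγ hγinv continuous_const t ht)
  -- the clamp function
  let c : ℝ → ℝ := fun s => max 0 (min s 1)
  have hccont : Continuous c := continuous_const.max (continuous_id.min continuous_const)
  have hcmem : ∀ s, c s ∈ Set.Icc (0:ℝ) 1 := fun s =>
    ⟨le_max_left _ _, max_le zero_le_one (min_le_right _ _)⟩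
  have hceq : ∀ t ∈ Set.Icc (0:ℝ) 1, c t = t := by
    intro t ht
    show max 0 (min t 1) = t
    rw [min_eq_left ht.2, max_eq_right ht.1]
  -- the control
  let g : ℝ → ℝ := fun s => h (c s)
  have hgcont : Continuous g := continuous_iff_continuousAt.mpr fun s =>
    (hcontAt (c s) (hcmem s)).comp hccont.continuousAt
  let v : ℝ → Matrix (Fin n) (Fin n) ℝ := fun t => g t • x
  have hvcont : Continuous v := hgcont.smul continuous_const
  have hvV : ∀ t ∈ Set.Icc (0:ℝ) 1, v t ∈ V := fun t _ => V.smul_mem _ hx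
  have hpt : ∀ t, Φ (γ t * v t * (γ t)⁻¹) = g t * h t := by
    intro t
    have hrw : γ t * v t * (γ t)⁻¹ = g t • (γ t * x * (γ t)⁻¹) := by
      show γ t * (g t • x) * (γ t)⁻¹ = g t • (γ t * x * (γ t)⁻¹)
      rw [mul_smul_comm, smul_mul_assoc]
    rw [hrw, Φ.map_smul, smul_eq_mul]
  have hzero : (∫ t in (0:ℝ)..1, g t * h t) = 0 := by
    have h1 : (∫ t in (0:ℝ)..1, γ t * v t * (γ t)⁻¹) ∈ S := hS v hvcont hvV
    have h2 : Φ (∫ t in (0:ℝ)..1, γ t * v t * (γ t)⁻¹) = 0 := hφ' _ h1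
    erw [← Φ.intervalIntegral_comp_comm (sard_aux_integrable hγ hγinv hvcont)] at h2
    exact (integral_congr fun t _ => hpt t).symm.trans h2
  have hsq : (∫ t in (0:ℝ)..1, h t * h t) = 0 := by
    refine Eq.trans (integral_congr fun t ht => ?_) hzero
    rw [Set.uIcc_of_le (zero_le_one : (0:ℝ) ≤ 1)] at ht
    show h t * h t = g t * h t
    have hgh : g t = h t := by show h (c t) = h t; rw [hceq t ht]
    rw [hgh]
  exact sard_aux_scalar_zero hcontAt hsq t₀ ht₀

end Aux

/-- Image of the differential of the endpoint map, in matrix coordinates: the set of integrals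
`∫₀¹ γ(t)·v(t)·γ(t)⁻¹ dt` over continuous controls `v` valued in the subspace `V` equals the
linear span of `{γ(t)·x·γ(t)⁻¹ : t ∈ [0,1], x ∈ V}`. -/
theorem sard_image_dEnd (n : ℕ) (γ : ℝ → Matrix (Fin n) (Fin n) ℝ)
    (hγ : Continuous γ) (hγinv : ∀ t ∈ Set.Icc (0:ℝ) 1, IsUnit (γ t))
    (V : Submodule ℝ (Matrix (Fin n) (Fin n) ℝ)) :
    {M : Matrix (Fin n) (Fin n) ℝ | ∃ v : ℝ → Matrix (Fin n) (Fin n) ℝ,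
        Continuous v ∧ (∀ t ∈ Set.Icc (0:ℝ) 1, v t ∈ V) ∧
        M = ∫ t in (0:ℝ)..1, γ t * v t * (γ t)⁻¹} =
      ↑(Submodule.span ℝ
        {M : Matrix (Fin n) (Fin n) ℝ | ∃ t ∈ Set.Icc (0:ℝ) 1, ∃ x ∈ V,
          M = γ t * x * (γ t)⁻¹}) := by
  have huIcc : Set.uIcc (0:ℝ) 1 = Set.Icc (0:ℝ) 1 := Set.uIcc_of_le zero_le_one
  -- the left-hand side is a submodule
  let S : Submodule ℝ (Matrix (Fin n) (Fin n) ℝ) :=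
    { carrier := {M : Matrix (Fin n) (Fin n) ℝ | ∃ v : ℝ → Matrix (Fin n) (Fin n) ℝ,
        Continuous v ∧ (∀ t ∈ Set.Icc (0:ℝ) 1, v t ∈ V) ∧
        M = ∫ t in (0:ℝ)..1, γ t * v t * (γ t)⁻¹}
      zero_mem' := ⟨0, continuous_const, fun t _ => V.zero_mem, by simp⟩
      add_mem' := by
        rintro a b ⟨v, hv, hvV, rfl⟩ ⟨w, hw, hwV, rfl⟩
        refine ⟨v + w, hv.add hw, fun t ht => V.add_mem (hvV t ht) (hwV t ht), ?_⟩
        rw [← integral_add (sard_aux_integrable hγ hγinv hv) (sard_aux_integrable hγ hγinv hw)]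
        refine integral_congr fun t _ => ?_
        simp [mul_add, add_mul]
      smul_mem' := by
        rintro c a ⟨v, hv, hvV, rfl⟩
        refine ⟨c • v, hv.const_smul c, fun t ht => V.smul_mem c (hvV t ht), ?_⟩
        rw [← intervalIntegral.integral_smul]
        refine integral_congr fun t _ => ?_
        simp [mul_smul_comm, smul_mul_assoc] }
  refine subset_antisymm ?_ ?_
  · -- forward inclusion: each integral lies in the span
    rintro M ⟨v, hv, hvV, rfl⟩
    rw [SetLike.mem_coe, ← Subspace.forall_mem_dualAnnihilator_apply_eq_zero_iff]
    intro φ hφ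
    have hφ' := (Submodule.mem_dualAnnihilator φ).mp hφ
    let Φ := LinearMap.toContinuousLinearMap φ
    have hΦ : ∀ y, Φ y = φ y := fun y => rfl
    have hcomm := Φ.intervalIntegral_comp_comm (sard_aux_integrable hγ hγinv hv)
    rw [show φ (∫ t in (0:ℝ)..1, γ t * v t * (γ t)⁻¹)
        = Φ (∫ t in (0:ℝ)..1, γ t * v t * (γ t)⁻¹) from rfl]
    erw [← hcomm]
    have : (∫ t in (0:ℝ)..1, Φ (γ t * v t * (γ t)⁻¹)) = ∫ t in (0:ℝ)..1, (0:ℝ) := by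
      refine integral_congr fun t ht => ?_
      rw [huIcc] at ht
      exact hφ' _ (Submodule.subset_span ⟨t, ht, v t, hvV t ht, rfl⟩)
    exact this.trans intervalIntegral.integral_zero
  · -- reverse inclusion: the span is contained in the set of integrals
    have hgen : {M : Matrix (Fin n) (Fin n) ℝ | ∃ t ∈ Set.Icc (0:ℝ) 1, ∃ x ∈ V,
        M = γ t * x * (γ t)⁻¹} ⊆ ↑S := by
      rintro M ⟨t₀, ht₀, x, hx, rfl⟩
      exact sard_aux_gen_mem hγ hγinv V S (fun v hv hvV => ⟨v, hv, hvV, rfl⟩) ht₀ hx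
    exact fun M hM => Submodule.span_le.mpr hgen hM
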